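/- Let I ⊆ ℝ∖{0,1} be an open interval and let F₁₂, F₁₃, F₂₃ : I → ℝ be differentiable functions satisfying the system F₁₂′(z) = F₁₃(z)F₂₃(z)/(z(z−1)), F₁₃′(z) = −F₁₂(z)F₂₃(z)/(z−1), F₂₃′(z) = F₁₂(z)F₁₃(z)/z on I. Then the function I(z) = F₁₂(z)² + F₁₃(z)² + F₂₃(z)² is constant on I. -/

import Mathlib

/-- for differentiable solutions `F₁₂, F₁₃, F₂₃` of the reduced
Darboux–Egorov system on an open interval `I ⊆ ℝ∖{0,1}`, the quantity
`F₁₂² + F₁₃² + F₂₃²` is constant on `I`. -/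
theorem stmt_2 (I : Set ℝ) (hIopen : IsOpen I) (hIconn : I.OrdConnected)
    (h0 : (0 : ℝ) ∉ I) (h1 : (1 : ℝ) ∉ I)
    (F12 F13 F23 : ℝ → ℝ)
    (hF12 : ∀ z ∈ I, HasDerivAt F12 (F13 z * F23 z / (z * (z - 1))) z)
    (hF13 : ∀ z ∈ I, HasDerivAt F13 (-(F12 z * F23 z) / (z - 1)) z)
    (hF23 : ∀ z ∈ I, HasDerivAt F23 (F12 z * F13 z / z) z) :
    ∀ z ∈ I, ∀ w ∈ I,
      F12 z ^ 2 + F13 z ^ 2 + F23 z ^ 2 = F12 w ^ 2 + F13 w ^ 2 + F23 w ^ 2 := by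
  set g : ℝ → ℝ := fun z => F12 z ^ 2 + F13 z ^ 2 + F23 z ^ 2 with hg
  have key : ∀ z ∈ I, HasDerivAt g 0 z := by
    intro z hz
    have hz0 : z ≠ 0 := fun h => h0 (h ▸ hz)
    have hz1 : z - 1 ≠ 0 := sub_ne_zero.mpr (fun h => h1 (h ▸ hz))
    have h := (((hF12 z hz).pow 2).add ((hF13 z hz).pow 2)).add ((hF23 z hz).pow 2)
    refine h.congr_deriv ?_
    field_simp
    ring
  have hconv : Convex ℝ I := hIconn.convex
  intro z hz w hw
  have := hconv.is_const_of_fderivWithin_eq_zero (𝕜 := ℝ) (f := g)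
    (fun x hx => ((key x hx).differentiableAt).differentiableWithinAt)
    (fun x hx => by
      rw [fderivWithin_eq_fderiv (hIopen.uniqueDiffWithinAt hx) (key x hx).differentiableAt]
      ext
      simp [(key x hx).hasFDerivAt.fderiv])
    hz hw
  exact this
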